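/- For ν ∈ ℕ and real m ≥ 1, define the 1-periodic function h_{ν,m} by h_{ν,m}(t) = t^ν for 0 ≤ t ≤ 1 − 1/m and h_{ν,m}(t) = m(1 − 1/m)^ν (1 − t) for 1 − 1/m ≤ t < 1. Then the Fourier coefficients ĥ_{ν,m}(μ) = ∫_0^1 h_{ν,m}(t) e^{-2πiμt} dt satisfy ∑_{μ∈ℤ} |ĥ_{ν,m}(μ)| ≤ C·ln(mν + 1) for an absolute constant C. -/

import Mathlib

/-- The 1-periodic function `h_{ν,m}` from the paper. -/
noncomputable def hfun (ν : ℕ) (m : ℝ) (t : ℝ) : ℝ :=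
  if Int.fract t ≤ 1 - 1 / m then (Int.fract t) ^ ν
  else m * (1 - 1 / m) ^ ν * (1 - Int.fract t)

/-- The `μ`-th Fourier coefficient of `h_{ν,m}`. -/
noncomputable def hfunHat (ν : ℕ) (m : ℝ) (μ : ℤ) : ℂ :=
  ∫ t in (0:ℝ)..1,
    (hfun ν m t : ℂ) * Complex.exp (-(2 * Real.pi * Complex.I * (μ : ℂ) * (t : ℂ)))

open intervalIntegral MeasureTheory Finset

noncomputable def Complex.abs : AbsoluteValue ℂ ℝ :=
  IsAbsoluteValue.toAbsoluteValue (norm : ℂ → ℝ)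

lemma Complex.norm_eq_abs (z : ℂ) : ‖z‖ = Complex.abs z := rfl

lemma Complex.abs_ofReal (r : ℝ) : Complex.abs (r : ℂ) = |r| := Complex.norm_real r

lemma Complex.abs_natCast (n : ℕ) : Complex.abs (n : ℂ) = n := Complex.norm_natCast n

lemma Complex.abs_exp (z : ℂ) : Complex.abs (Complex.exp z) = Real.exp z.re := Complex.norm_exp z

lemma Complex.abs_exp_sub_one_le {x : ℂ} (hx : Complex.abs x ≤ 1) :
    Complex.abs (Complex.exp x - 1) ≤ 2 * Complex.abs x := Complex.norm_exp_sub_one_le hx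

noncomputable section
namespace S18

def cc (μ : ℤ) : ℂ := -(2 * Real.pi * Complex.I * μ)

def E (μ : ℤ) (t : ℝ) : ℂ := Complex.exp (cc μ * t)

lemma re_cc_mul (μ : ℤ) (t : ℝ) : (cc μ * (t:ℂ)).re = 0 := by
  simp [cc, Complex.ext_iff]

lemma abs_E (μ : ℤ) (t : ℝ) : Complex.abs (E μ t) = 1 := by
  rw [E, Complex.abs_exp, re_cc_mul, Real.exp_zero]

lemma abs_cc (μ : ℤ) : Complex.abs (cc μ) = 2 * Real.pi * |(μ:ℝ)| := by
  rw [← Complex.norm_eq_abs]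
  simp [cc, abs_of_nonneg Real.pi_pos.le, mul_assoc]

lemma cc_ne (μ : ℤ) (hμ : μ ≠ 0) : cc μ ≠ 0 := by
  simp [cc, Real.pi_ne_zero, Complex.I_ne_zero, hμ]

lemma E_hasDeriv (μ : ℤ) (t : ℝ) : HasDerivAt (E μ) (cc μ * E μ t) t := by
  have h : HasDerivAt (fun z : ℂ => Complex.exp (cc μ * z))
      (cc μ * Complex.exp (cc μ * t)) (t:ℂ) := by
    simpa [mul_comm] using ((hasDerivAt_id (t:ℂ)).const_mul (cc μ)).cexp
  exact h.comp_ofReal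

lemma E_cont (μ : ℤ) : Continuous (E μ) :=
  Complex.continuous_exp.comp (continuous_const.mul Complex.continuous_ofReal)

lemma pow_hasDeriv (n : ℕ) (t : ℝ) :
    HasDerivAt (fun t : ℝ => (t:ℂ)^n) (n * (t:ℂ)^(n-1)) t :=
  (hasDerivAt_pow n (t:ℂ)).comp_ofReal

lemma E_one (μ : ℤ) : E μ 1 = 1 := by
  rw [E]
  rw [show cc μ * (1:ℝ) = (-μ : ℤ) * (2 * Real.pi * Complex.I) by push_cast [cc]; ring]
  exact Complex.exp_int_mul_two_pi_mul_I _


lemma intE (μ : ℤ) (hμ : μ ≠ 0) (a b : ℝ) :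
    ∫ t in a..b, E μ t = (E μ b - E μ a) / cc μ := by
  simpa [E] using integral_exp_mul_complex (cc_ne μ hμ)

/-- integration by parts for `∫ t^n E`, `n ≥ 1`. -/
lemma ibp_pow (μ : ℤ) (hμ : μ ≠ 0) (n : ℕ) (hn : 1 ≤ n) (a : ℝ) :
    ∫ t in (0:ℝ)..a, (t:ℂ)^n * E μ t
      = (a:ℂ)^n * E μ a / cc μ
        - ((n:ℂ) / cc μ) * ∫ t in (0:ℝ)..a, (t:ℂ)^(n-1) * E μ t := by
  have hc := cc_ne μ hμ
  have hv : ∀ t ∈ Set.uIcc (0:ℝ) a, HasDerivAt (fun t => E μ t / cc μ) (E μ t) t := by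
    intro t _
    simpa [mul_div_assoc, mul_div_cancel_left₀ _ hc] using (E_hasDeriv μ t).div_const (cc μ)
  have hu : ∀ t ∈ Set.uIcc (0:ℝ) a, HasDerivAt (fun t : ℝ => (t:ℂ)^n)
      ((n:ℂ) * (t:ℂ)^(n-1)) t := fun t _ => pow_hasDeriv n t
  have hint : (∫ t in (0:ℝ)..a, (t:ℂ)^n * E μ t)
      = (a:ℂ)^n * (E μ a / cc μ) - (0:ℂ)^n * (E μ 0 / cc μ)
        - ∫ t in (0:ℝ)..a, ((n:ℂ) * (t:ℂ)^(n-1)) * (E μ t / cc μ) := by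
    exact integral_mul_deriv_eq_deriv_mul hu hv
      ((continuous_const.mul ((Complex.continuous_ofReal.pow _))).intervalIntegrable 0 a)
      ((E_cont μ).intervalIntegrable 0 a)
  rw [hint, zero_pow (by omega), zero_mul, sub_zero, mul_div_assoc]
  congr 1
  rw [← intervalIntegral.integral_const_mul]
  congr 1; funext t; ring

lemma ibp_lin (μ : ℤ) (hμ : μ ≠ 0) (a : ℝ) :
    ∫ t in a..(1:ℝ), (1 - (t:ℂ)) * E μ t
      = -((1 - (a:ℂ)) * E μ a / cc μ) + (E μ 1 - E μ a) / cc μ / cc μ := by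
  have hc := cc_ne μ hμ
  have hv : ∀ t ∈ Set.uIcc a (1:ℝ), HasDerivAt (fun t => E μ t / cc μ) (E μ t) t := by
    intro t _
    simpa [mul_div_assoc, mul_div_cancel_left₀ _ hc] using (E_hasDeriv μ t).div_const (cc μ)
  have hu : ∀ t ∈ Set.uIcc a (1:ℝ), HasDerivAt (fun t : ℝ => 1 - (t:ℂ)) (-1 : ℂ) t := by
    intro t _
    simpa using ((Complex.ofRealCLM.hasDerivAt (x := t)).const_sub (1:ℂ))
  have hint : (∫ t in a..(1:ℝ), (1 - (t:ℂ)) * E μ t)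
      = (1 - (1:ℂ)) * (E μ 1 / cc μ) - (1 - (a:ℂ)) * (E μ a / cc μ)
        - ∫ t in a..(1:ℝ), (-1 : ℂ) * (E μ t / cc μ) := by
    exact integral_mul_deriv_eq_deriv_mul hu hv
      (intervalIntegrable_const) ((E_cont μ).intervalIntegrable a 1)
  rw [hint]
  rw [show (∫ t in a..(1:ℝ), (-1:ℂ) * (E μ t / cc μ))
      = -(1/cc μ) * ∫ t in a..(1:ℝ), E μ t by
    rw [← intervalIntegral.integral_const_mul]; congr 1; funext t; ring]
  rw [intE μ hμ]
  field_simp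
  ring

lemma hat_eq (ν : ℕ) (m : ℝ) (μ : ℤ) (hν : 1 ≤ ν) (hm : 1 ≤ m) :
    hfunHat ν m μ =
      (∫ t in (0:ℝ)..(1-1/m), (t:ℂ)^ν * E μ t)
      + ((m:ℂ) * ((1-1/m : ℝ):ℂ)^ν) * ∫ t in ((1-1/m):ℝ)..1, (1 - (t:ℂ)) * E μ t := by
  have hm0 : (0:ℝ) < m := lt_of_lt_of_le one_pos hm
  have hinv : 0 < 1/m := by positivity
  have hinv1 : 1/m ≤ 1 := by rw [div_le_one hm0]; exact hm
  have ha0 : (0:ℝ) ≤ 1 - 1/m := by linarith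
  have ha1 : (1:ℝ) - 1/m < 1 := by linarith
  have hexp : ∀ t : ℝ, Complex.exp (-(2 * Real.pi * Complex.I * (μ : ℂ) * (t : ℂ))) = E μ t := by
    intro t; rw [E, cc]; ring_nf
  have h1 : hfunHat ν m μ = ∫ t in (0:ℝ)..1, (hfun ν m t : ℂ) * E μ t := by
    rw [hfunHat]; congr 1; funext t; rw [hexp]
  have e1 : Set.EqOn (fun t => (hfun ν m t : ℂ) * E μ t) (fun t => (t:ℂ)^ν * E μ t)
      (Set.uIcc 0 (1-1/m)) := by
    intro t ht
    rw [Set.uIcc_of_le ha0] at ht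
    obtain ⟨ht0, hta⟩ := ht
    have hfr : Int.fract t = t := Int.fract_eq_self.mpr ⟨ht0, lt_of_le_of_lt hta ha1⟩
    simp only [hfun, hfr]
    rw [if_pos hta]
    push_cast; ring
  have e2 : Set.EqOn (fun t => (hfun ν m t : ℂ) * E μ t)
      (fun t => ((m:ℂ) * ((1-1/m : ℝ):ℂ)^ν) * ((1 - (t:ℂ)) * E μ t))
      (Set.uIcc (1-1/m) 1) := by
    intro t ht
    rw [Set.uIcc_of_le ha1.le] at ht
    obtain ⟨hta, ht1⟩ := ht
    have hmne : (m:ℂ) ≠ 0 := by exact_mod_cast hm0.ne'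
    rcases eq_or_lt_of_le ht1 with h1' | h1'
    · subst h1'
      simp only [hfun, Int.fract_one]
      rw [if_pos ha0, zero_pow (by omega)]
      push_cast; ring
    · have hfr : Int.fract t = t := Int.fract_eq_self.mpr ⟨le_trans ha0 hta, h1'⟩
      simp only [hfun, hfr]
      rcases (eq_or_lt_of_le hta) with h2' | h2'
      · rw [← h2', if_pos le_rfl]
        push_cast
        field_simp
        ring
      · rw [if_neg (not_le.mpr h2')]
        push_cast; ring
  have contG2 : Continuous (fun t : ℝ =>
      ((m:ℂ) * ((1-1/m : ℝ):ℂ)^ν) * ((1 - (t:ℂ)) * E μ t)) :=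
    continuous_const.mul (((continuous_const.sub Complex.continuous_ofReal)).mul (E_cont μ))
  have i1 : IntervalIntegrable (fun t => (hfun ν m t : ℂ) * E μ t) volume 0 (1-1/m) := by
    apply (((Complex.continuous_ofReal.pow ν).mul (E_cont μ)).intervalIntegrable _ _).congr
    exact (fun t ht => (e1 (Set.uIoc_subset_uIcc ht)).symm)
  have i2 : IntervalIntegrable (fun t => (hfun ν m t : ℂ) * E μ t) volume (1-1/m) 1 := by
    apply (contG2.intervalIntegrable _ _).congr
    exact (fun t ht => (e2 (Set.uIoc_subset_uIcc ht)).symm)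
  rw [h1, ← integral_add_adjacent_intervals i1 i2, integral_congr e1, integral_congr e2,
    intervalIntegral.integral_const_mul]

lemma hat_formula (ν : ℕ) (m : ℝ) (μ : ℤ) (hν : 1 ≤ ν) (hm : 1 ≤ m) (hμ : μ ≠ 0) :
    hfunHat ν m μ =
      -(((ν:ℂ)) / cc μ) * (∫ t in (0:ℝ)..(1-1/m), (t:ℂ)^(ν-1) * E μ t)
      + (m:ℂ) * ((1-1/m : ℝ):ℂ)^ν * (1 - E μ (1-1/m)) / (cc μ)^2 := by
  have hm0 : (0:ℝ) < m := lt_of_lt_of_le one_pos hm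
  have hmne : (m:ℂ) ≠ 0 := by exact_mod_cast hm0.ne'
  have hc := cc_ne μ hμ
  rw [hat_eq ν m μ hν hm, ibp_pow μ hμ ν hν, ibp_lin μ hμ, E_one]
  have hkey : (m:ℂ) * (1 - ((1 - 1/m : ℝ):ℂ)) = 1 := by
    push_cast; field_simp; ring
  linear_combination (-( ((1-1/m:ℝ):ℂ)^ν * E μ (1-1/m) / cc μ)) * hkey

lemma normJ' (μ : ℤ) (n : ℕ) (hn : 1 ≤ n) (a : ℝ) (ha0 : 0 ≤ a) (ha1 : a ≤ 1) :
    Complex.abs (∫ t in (0:ℝ)..a, (t:ℂ)^(n-1) * E μ t) ≤ 1/n := by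
  have h1 : Complex.abs (∫ t in (0:ℝ)..a, (t:ℂ)^(n-1) * E μ t)
      ≤ ∫ t in (0:ℝ)..a, ‖(t:ℂ)^(n-1) * E μ t‖ := by
    rw [← Complex.norm_eq_abs]
    exact intervalIntegral.norm_integral_le_integral_norm ha0
  have h2 : (∫ t in (0:ℝ)..a, ‖(t:ℂ)^(n-1) * E μ t‖) = ∫ t in (0:ℝ)..a, t^(n-1) := by
    apply integral_congr
    intro t ht
    rw [Set.uIcc_of_le ha0] at ht
    simp only [norm_mul, norm_pow, Complex.norm_eq_abs, abs_E, mul_one, Complex.abs_ofReal,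
      abs_of_nonneg ht.1]
  have h3 : (∫ t in (0:ℝ)..a, t^(n-1)) = a^n / n := by
    have h : n - 1 + 1 = n := Nat.succ_pred_eq_of_pos hn
    rw [integral_pow, h, Nat.cast_sub hn, zero_pow (by omega : n ≠ 0)]
    push_cast
    ring
  have h4 : a^n ≤ 1 := pow_le_one₀ ha0 ha1
  calc Complex.abs (∫ t in (0:ℝ)..a, (t:ℂ)^(n-1) * E μ t) ≤ a^n/n := by
        rw [← h3, ← h2]; exact h1
    _ ≤ 1/n := by
        have hn0 : (0:ℝ) < n := by exact_mod_cast hn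
        gcongr


lemma abs_cc_pos (μ : ℤ) (hμ : μ ≠ 0) : 0 < Complex.abs (cc μ) :=
  AbsoluteValue.pos _ (cc_ne μ hμ)

lemma normI1_le (ν : ℕ) (m : ℝ) (μ : ℤ) (hν : 1 ≤ ν) (hm : 1 ≤ m) (hμ : μ ≠ 0) :
    Complex.abs (∫ t in (0:ℝ)..(1-1/m), (t:ℂ)^(ν-1) * E μ t)
      ≤ 2 / Complex.abs (cc μ) := by
  have hm0 : (0:ℝ) < m := lt_of_lt_of_le one_pos hm
  have hinv0 : (0:ℝ) ≤ 1/m := by positivity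
  have hinv1 : 1/m ≤ 1 := by rw [div_le_one hm0]; exact hm
  have ha0 : (0:ℝ) ≤ 1 - 1/m := by linarith
  have ha1 : (1:ℝ) - 1/m ≤ 1 := by linarith
  have hac := abs_cc_pos μ hμ
  rcases Nat.lt_or_ge ν 2 with h2 | h2
  · have hν1 : ν = 1 := by omega
    subst hν1
    simp only [Nat.sub_self, pow_zero, one_mul]
    rw [intE μ hμ, map_div₀]
    have hnum : Complex.abs (E μ (1-1/m) - E μ 0) ≤ 2 := by
      calc Complex.abs (E μ (1-1/m) - E μ 0)
          ≤ Complex.abs (E μ (1-1/m)) + Complex.abs (E μ 0) := by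
            simpa [Complex.norm_eq_abs] using norm_sub_le (E μ (1-1/m)) (E μ 0)
        _ = 2 := by rw [abs_E, abs_E]; norm_num
    gcongr
  · rw [ibp_pow μ hμ (ν-1) (by omega)]
    have hJ := normJ' μ (ν-1) (by omega) (1-1/m) ha0 ha1
    have habs1 : Complex.abs (((1-1/m : ℝ):ℂ)^(ν-1) * E μ (1-1/m) / cc μ)
        ≤ 1 / Complex.abs (cc μ) := by
      rw [map_div₀, map_mul, map_pow, abs_E, Complex.abs_ofReal, abs_of_nonneg ha0, mul_one]
      gcongr
      exact pow_le_one₀ ha0 ha1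
    have habs2 : Complex.abs ((((ν-1:ℕ):ℂ) / cc μ) *
          ∫ t in (0:ℝ)..(1-1/m), (t:ℂ)^(ν-1-1) * E μ t)
        ≤ 1 / Complex.abs (cc μ) := by
      rw [map_mul, map_div₀, Complex.abs_natCast]
      calc ((ν-1:ℕ):ℝ) / Complex.abs (cc μ) *
            Complex.abs (∫ t in (0:ℝ)..(1-1/m), (t:ℂ)^(ν-1-1) * E μ t)
          ≤ ((ν-1:ℕ):ℝ) / Complex.abs (cc μ) * (1/((ν-1:ℕ):ℝ)) :=
            mul_le_mul_of_nonneg_left hJ (by positivity)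
        _ = 1 / Complex.abs (cc μ) := by
            have hν1 : (0:ℝ) < ((ν-1:ℕ):ℝ) := by
              have : 1 ≤ ν - 1 := by omega
              exact_mod_cast this
            rw [div_mul_div_comm, mul_one, mul_comm]
            rw [div_eq_div_iff (by positivity) hac.ne']
            ring
    calc Complex.abs _ ≤ Complex.abs (((1-1/m : ℝ):ℂ)^(ν-1) * E μ (1-1/m) / cc μ)
          + Complex.abs ((((ν-1:ℕ):ℂ) / cc μ) *
            ∫ t in (0:ℝ)..(1-1/m), (t:ℂ)^(ν-1-1) * E μ t) := by
          exact norm_sub_le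
            (((1-1/m : ℝ):ℂ)^(ν-1) * E μ (1-1/m) / cc μ)
            ((((ν-1:ℕ):ℂ) / cc μ) * ∫ t in (0:ℝ)..(1-1/m), (t:ℂ)^(ν-1-1) * E μ t)
      _ ≤ 1 / Complex.abs (cc μ) + 1 / Complex.abs (cc μ) := add_le_add habs1 habs2
      _ = 2 / Complex.abs (cc μ) := by ring


lemma absOneSubEa (m : ℝ) (μ : ℤ) (hm : 1 ≤ m) :
    Complex.abs (1 - E μ (1-1/m)) ≤ min 2 (2 * Complex.abs (cc μ) / m) := by
  have hm0 : (0:ℝ) < m := lt_of_lt_of_le one_pos hm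
  have hE : E μ (1-1/m) = Complex.exp (cc μ * ((-(1/m):ℝ):ℂ)) := by
    have h1 : Complex.exp (cc μ * ((1:ℝ):ℂ)) = 1 := E_one μ
    calc E μ (1-1/m) = Complex.exp (cc μ * ((-(1/m):ℝ):ℂ)) * Complex.exp (cc μ * ((1:ℝ):ℂ)) := by
          rw [← Complex.exp_add, E]; congr 1; push_cast; ring
      _ = Complex.exp (cc μ * ((-(1/m):ℝ):ℂ)) := by rw [h1, mul_one]
  set z : ℂ := cc μ * ((-(1/m):ℝ):ℂ) with hz
  have habsz : Complex.abs z = Complex.abs (cc μ) / m := by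
    rw [hz, map_mul, Complex.abs_ofReal, abs_neg, abs_of_nonneg (by positivity : (0:ℝ) ≤ 1/m)]
    ring
  have habsEz : Complex.abs (Complex.exp z) = 1 := by
    rw [Complex.abs_exp, re_cc_mul, Real.exp_zero]
  have h2 : Complex.abs (1 - Complex.exp z) ≤ 2 := by
    calc Complex.abs (1 - Complex.exp z) ≤ Complex.abs 1 + Complex.abs (Complex.exp z) := by
          simpa [Complex.norm_eq_abs] using norm_sub_le (1:ℂ) (Complex.exp z)
      _ = 2 := by rw [habsEz, map_one]; norm_num
  have hz2 : Complex.abs (1 - Complex.exp z) ≤ 2 * Complex.abs z := by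
    rcases le_or_gt (Complex.abs z) 1 with hle | hlt
    · rw [show (1:ℂ) - Complex.exp z = -(Complex.exp z - 1) by ring, Complex.abs.map_neg]
      exact Complex.abs_exp_sub_one_le hle
    · calc Complex.abs (1 - Complex.exp z) ≤ 2 := h2
        _ ≤ 2 * Complex.abs z := by nlinarith
  rw [hE]
  refine le_min h2 ?_
  calc Complex.abs (1 - Complex.exp z) ≤ 2 * Complex.abs z := hz2
    _ = 2 * Complex.abs (cc μ) / m := by rw [habsz]; ring

lemma boundA (ν : ℕ) (m : ℝ) (μ : ℤ) (hν : 1 ≤ ν) (hm : 1 ≤ m) (hμ : μ ≠ 0) :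
    Complex.abs (hfunHat ν m μ) ≤ 1 / |(μ:ℝ)| := by
  have hm0 : (0:ℝ) < m := lt_of_lt_of_le one_pos hm
  have hinv1 : 1/m ≤ 1 := by rw [div_le_one hm0]; exact hm
  have h01 : (0:ℝ) ≤ 1/m := by positivity
  have ha0 : (0:ℝ) ≤ 1 - 1/m := by linarith
  have hac := abs_cc_pos μ hμ
  have hμ1 : (1:ℝ) ≤ |(μ:ℝ)| := by
    rw [← Int.cast_abs]
    exact_mod_cast Int.one_le_abs (by exact_mod_cast hμ)
  rw [hat_formula ν m μ hν hm hμ]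
  -- first term
  have hI := normJ' μ ν hν (1-1/m) ha0 (by linarith)
  have h1 : Complex.abs (-(((ν:ℂ)) / cc μ) *
        (∫ t in (0:ℝ)..(1-1/m), (t:ℂ)^(ν-1) * E μ t)) ≤ 1 / Complex.abs (cc μ) := by
    rw [map_mul, Complex.abs.map_neg, map_div₀, Complex.abs_natCast]
    have hν0 : (0:ℝ) < (ν:ℝ) := by exact_mod_cast hν
    calc (ν:ℝ) / Complex.abs (cc μ) * Complex.abs (∫ t in (0:ℝ)..(1-1/m), (t:ℂ)^(ν-1) * E μ t)
        ≤ (ν:ℝ) / Complex.abs (cc μ) * (1/(ν:ℝ)) :=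
          mul_le_mul_of_nonneg_left hI (by positivity)
      _ = 1 / Complex.abs (cc μ) := by field_simp
  have h2 : Complex.abs ((m:ℂ) * ((1-1/m : ℝ):ℂ)^ν * (1 - E μ (1-1/m)) / (cc μ)^2)
      ≤ 2 / Complex.abs (cc μ) := by
    rw [map_div₀, map_mul, map_mul, map_pow, map_pow, Complex.abs_ofReal, Complex.abs_ofReal,
      abs_of_nonneg hm0.le, abs_of_nonneg ha0]
    have hEa := (absOneSubEa m μ hm).trans (min_le_right _ _)
    calc m * (1-1/m)^ν * Complex.abs (1 - E μ (1-1/m)) / Complex.abs (cc μ)^2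
        ≤ m * 1 * (2 * Complex.abs (cc μ) / m) / Complex.abs (cc μ)^2 := by
          gcongr
          exact pow_le_one₀ ha0 (by linarith)
      _ = 2 / Complex.abs (cc μ) := by field_simp
  have tri : Complex.abs (-(((ν:ℂ)) / cc μ) *
        (∫ t in (0:ℝ)..(1-1/m), (t:ℂ)^(ν-1) * E μ t)
        + (m:ℂ) * ((1-1/m : ℝ):ℂ)^ν * (1 - E μ (1-1/m)) / (cc μ)^2)
      ≤ Complex.abs (-(((ν:ℂ)) / cc μ) *
        (∫ t in (0:ℝ)..(1-1/m), (t:ℂ)^(ν-1) * E μ t))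
        + Complex.abs ((m:ℂ) * ((1-1/m : ℝ):ℂ)^ν * (1 - E μ (1-1/m)) / (cc μ)^2) := by
    simpa only [Complex.norm_eq_abs] using norm_add_le
      (-(((ν:ℂ)) / cc μ) * (∫ t in (0:ℝ)..(1-1/m), (t:ℂ)^(ν-1) * E μ t))
      ((m:ℂ) * ((1-1/m : ℝ):ℂ)^ν * (1 - E μ (1-1/m)) / (cc μ)^2)
  calc _ ≤ 1 / Complex.abs (cc μ) + 2 / Complex.abs (cc μ) :=
        tri.trans (add_le_add h1 h2)
    _ = 3 / Complex.abs (cc μ) := by ring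
    _ ≤ 1 / |(μ:ℝ)| := by
        rw [abs_cc]
        rw [div_le_div_iff₀ (by positivity) (by positivity)]
        have hπ : 3 ≤ Real.pi := by linarith [Real.pi_gt_three]
        nlinarith

lemma boundB (ν : ℕ) (m : ℝ) (μ : ℤ) (hν : 1 ≤ ν) (hm : 1 ≤ m) (hμ : μ ≠ 0) :
    Complex.abs (hfunHat ν m μ) ≤ (m + ν) / (μ:ℝ)^2 := by
  have hm0 : (0:ℝ) < m := lt_of_lt_of_le one_pos hm
  have hinv1 : 1/m ≤ 1 := by rw [div_le_one hm0]; exact hm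
  have h01 : (0:ℝ) ≤ 1/m := by positivity
  have ha0 : (0:ℝ) ≤ 1 - 1/m := by linarith
  have hac := abs_cc_pos μ hμ
  have hμ1 : (1:ℝ) ≤ |(μ:ℝ)| := by
    rw [← Int.cast_abs]
    exact_mod_cast Int.one_le_abs (by exact_mod_cast hμ)
  rw [hat_formula ν m μ hν hm hμ]
  have hI := normI1_le ν m μ hν hm hμ
  have h1 : Complex.abs (-(((ν:ℂ)) / cc μ) *
        (∫ t in (0:ℝ)..(1-1/m), (t:ℂ)^(ν-1) * E μ t))
      ≤ 2 * ν / Complex.abs (cc μ)^2 := by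
    rw [map_mul, Complex.abs.map_neg, map_div₀, Complex.abs_natCast]
    calc (ν:ℝ) / Complex.abs (cc μ) * Complex.abs (∫ t in (0:ℝ)..(1-1/m), (t:ℂ)^(ν-1) * E μ t)
        ≤ (ν:ℝ) / Complex.abs (cc μ) * (2 / Complex.abs (cc μ)) :=
          mul_le_mul_of_nonneg_left hI (by positivity)
      _ = 2 * ν / Complex.abs (cc μ)^2 := by field_simp
  have h2 : Complex.abs ((m:ℂ) * ((1-1/m : ℝ):ℂ)^ν * (1 - E μ (1-1/m)) / (cc μ)^2)
      ≤ 2 * m / Complex.abs (cc μ)^2 := by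
    rw [map_div₀, map_mul, map_mul, map_pow, map_pow, Complex.abs_ofReal, Complex.abs_ofReal,
      abs_of_nonneg hm0.le, abs_of_nonneg ha0]
    have hEa := (absOneSubEa m μ hm).trans (min_le_left _ _)
    calc m * (1-1/m)^ν * Complex.abs (1 - E μ (1-1/m)) / Complex.abs (cc μ)^2
        ≤ m * 1 * 2 / Complex.abs (cc μ)^2 := by
          gcongr
          exact pow_le_one₀ ha0 (by linarith)
      _ = 2 * m / Complex.abs (cc μ)^2 := by ring
  have tri : Complex.abs (-(((ν:ℂ)) / cc μ) *
        (∫ t in (0:ℝ)..(1-1/m), (t:ℂ)^(ν-1) * E μ t)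
        + (m:ℂ) * ((1-1/m : ℝ):ℂ)^ν * (1 - E μ (1-1/m)) / (cc μ)^2)
      ≤ Complex.abs (-(((ν:ℂ)) / cc μ) *
        (∫ t in (0:ℝ)..(1-1/m), (t:ℂ)^(ν-1) * E μ t))
        + Complex.abs ((m:ℂ) * ((1-1/m : ℝ):ℂ)^ν * (1 - E μ (1-1/m)) / (cc μ)^2) := by
    simpa only [Complex.norm_eq_abs] using norm_add_le
      (-(((ν:ℂ)) / cc μ) * (∫ t in (0:ℝ)..(1-1/m), (t:ℂ)^(ν-1) * E μ t))
      ((m:ℂ) * ((1-1/m : ℝ):ℂ)^ν * (1 - E μ (1-1/m)) / (cc μ)^2)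
  calc _ ≤ 2 * ν / Complex.abs (cc μ)^2 + 2 * m / Complex.abs (cc μ)^2 :=
        tri.trans (add_le_add h1 h2)
    _ = (2 * ν + 2 * m) / Complex.abs (cc μ)^2 := by ring
    _ ≤ (m + ν) / (μ:ℝ)^2 := by
        rw [abs_cc]
        have hπ : 3 ≤ Real.pi := by linarith [Real.pi_gt_three]
        have hν0 : (1:ℝ) ≤ (ν:ℝ) := by exact_mod_cast hν
        have hμ2 : (0:ℝ) < (μ:ℝ)^2 := by
          have : (μ:ℝ) ≠ 0 := by exact_mod_cast hμ
          positivity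
        rw [div_le_div_iff₀ (by positivity) hμ2]
        have h4 : (2*Real.pi*|(μ:ℝ)|)^2 = 4*Real.pi^2*(μ:ℝ)^2 := by
          rw [mul_pow, mul_pow, sq_abs]; ring
        rw [h4]
        have hπ2 : (9:ℝ) ≤ Real.pi^2 := by nlinarith
        nlinarith [mul_pos (show (0:ℝ) < m + (ν:ℝ) by linarith) hμ2, hπ2]


lemma hfun_abs_le (ν : ℕ) (m : ℝ) (t : ℝ) (hν : 1 ≤ ν) (hm : 1 ≤ m) : |hfun ν m t| ≤ 1 := by
  have hm0 : (0:ℝ) < m := lt_of_lt_of_le one_pos hm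
  have hinv1 : 1/m ≤ 1 := by rw [div_le_one hm0]; exact hm
  have h01 : (0:ℝ) ≤ 1/m := by positivity
  have hx0 : 0 ≤ Int.fract t := Int.fract_nonneg t
  have hx1 : Int.fract t < 1 := Int.fract_lt_one t
  rw [hfun]
  split_ifs with h
  · rw [abs_of_nonneg (by positivity)]
    exact pow_le_one₀ hx0 hx1.le
  · push_neg at h
    have ha0 : (0:ℝ) ≤ 1 - 1/m := by linarith
    have h5 : 0 ≤ 1 - Int.fract t := by linarith
    rw [abs_of_nonneg (by positivity)]
    have h6 : 1 - Int.fract t ≤ 1/m := by linarith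
    calc m * (1 - 1/m)^ν * (1 - Int.fract t) ≤ m * 1 * (1/m) := by
          gcongr
          exact pow_le_one₀ ha0 (by linarith)
      _ = 1 := by field_simp
lemma bound0 (ν : ℕ) (m : ℝ) (hν : 1 ≤ ν) (hm : 1 ≤ m) :
    Complex.abs (hfunHat ν m 0) ≤ 1 := by
  have h1 : hfunHat ν m 0 = ∫ t in (0:ℝ)..1, (hfun ν m t : ℂ) := by
    rw [hfunHat]
    congr 1; funext t
    norm_num
  rw [h1, ← Complex.norm_eq_abs]
  have := intervalIntegral.norm_integral_le_of_norm_le_const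
    (C := 1) (f := fun t : ℝ => (hfun ν m t : ℂ)) (a := (0:ℝ)) (b := 1) ?_
  · simpa using this
  · intro x _
    rw [Complex.norm_eq_abs, Complex.abs_ofReal]
    exact hfun_abs_le ν m x hν hm

end S18
end

open S18

set_option maxHeartbeats 4000000 in
theorem stmt_18 :
    ∃ C : ℝ, 0 < C ∧ ∀ ν : ℕ, 1 ≤ ν → ∀ m : ℝ, 1 ≤ m →
      ∑' μ : ℤ, ‖hfunHat ν m μ‖ ≤ C * Real.log (m * ν + 1) := by
  refine ⟨20, by norm_num, ?_⟩
  intro ν hν m hm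
  have hν1 : (1:ℝ) ≤ (ν:ℝ) := by exact_mod_cast hν
  have hm0 : (0:ℝ) < m := lt_of_lt_of_le one_pos hm
  have hmn : (1:ℝ) ≤ m * ν := by nlinarith
  set L := Real.log (m * ν + 1) with hLdef
  have hL : Real.log 2 ≤ L := Real.log_le_log (by norm_num) (by linarith)
  have hlog2 : (0.6931471803:ℝ) < Real.log 2 := Real.log_two_gt_d9
  have hlog2' : Real.log 2 < 0.6931471808 := Real.log_two_lt_d9
  set V : ℝ := m + ν with hVdef
  have hV2 : (2:ℝ) ≤ V := by simp [hVdef]; linarith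
  have hV0 : (0:ℝ) < V := by linarith
  -- the dominating function
  set g : ℤ → ℝ := fun μ => if μ = 0 then 1 else min (1/|(μ:ℝ)|) (V/(μ:ℝ)^2) with hgdef
  have hg0 : ∀ μ, 0 ≤ g μ := by
    intro μ
    simp only [hgdef]
    split_ifs with h
    · norm_num
    · have : ((μ:ℝ)) ≠ 0 := by exact_mod_cast h
      apply le_min <;> positivity
  have hfg : ∀ μ, Complex.abs (hfunHat ν m μ) ≤ g μ := by
    intro μ
    simp only [hgdef]
    split_ifs with h
    · subst h; exact bound0 ν m hν hm
    · exact le_min (boundA ν m μ hν hm h) (boundB ν m μ hν hm h)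
  -- summability of g
  have hS1 : Summable (fun μ : ℤ => V * (1/((μ:ℝ)^2))) :=
    (Real.summable_one_div_int_pow.mpr one_lt_two).mul_left V
  have hG2sum : Summable (fun μ : ℤ => V * (1/((μ:ℝ)^2)) + (if μ = 0 then 1 else 0)) := by
    apply hS1.add
    apply summable_of_ne_finset_zero (s := ({0} : Finset ℤ))
    intro μ hμ
    simp only [Finset.mem_singleton] at hμ
    rw [if_neg hμ]
  have hle : ∀ μ : ℤ, g μ ≤ V * (1/((μ:ℝ)^2)) + (if μ = 0 then 1 else 0) := by
    intro μ
    simp only [hgdef]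
    split_ifs with h
    · subst h; norm_num
    · have h0 : ((μ:ℝ)) ≠ 0 := by exact_mod_cast h
      calc min (1/|(μ:ℝ)|) (V/(μ:ℝ)^2) ≤ V/(μ:ℝ)^2 := min_le_right _ _
        _ ≤ V * (1/(μ:ℝ)^2) + 0 := by rw [mul_one_div, add_zero]
  have hgsum : Summable g := Summable.of_nonneg_of_le hg0 hle hG2sum
  have hfsum : Summable (fun μ : ℤ => Complex.abs (hfunHat ν m μ)) :=
    Summable.of_nonneg_of_le (fun _ => AbsoluteValue.nonneg _ _) hfg hgsum
  have key : (∑' μ : ℤ, Complex.abs (hfunHat ν m μ)) ≤ ∑' μ : ℤ, g μ :=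
    hfsum.tsum_le_tsum hfg hgsum
  -- now estimate ∑' g
  set q : ℕ → ℝ := fun n => min (1/((n:ℝ)+1)) (V/((n:ℝ)+1)^2) with hqdef
  have hq0 : ∀ n, 0 ≤ q n := by
    intro n; apply le_min <;> positivity
  have hgq : ∀ n : ℕ, g ((n:ℤ)+1) = q n := by
    intro n
    have h1 : ((n:ℤ)+1) ≠ 0 := by positivity
    simp only [hgdef, hqdef, if_neg h1]
    have : ((((n:ℤ)+1 : ℤ)):ℝ) = (n:ℝ)+1 := by push_cast; ring
    rw [this, abs_of_pos (by positivity)]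
  have hgq' : ∀ n : ℕ, g (-((n:ℤ)+1)) = q n := by
    intro n
    have h1 : (-((n:ℤ)+1)) ≠ 0 := by
      intro h; omega
    simp only [hgdef, hqdef, if_neg h1]
    have h2 : (((-((n:ℤ)+1) : ℤ)):ℝ) = -((n:ℝ)+1) := by push_cast; ring
    rw [h2, abs_neg, abs_of_pos (by positivity), neg_sq]
  -- split the tsum over ℤ
  have hsnat : Summable (fun n : ℕ => g n) :=
    hgsum.comp_injective (fun a b h => by exact_mod_cast h)
  have hinj : Function.Injective (fun n : ℕ => -((n:ℤ)+1)) := by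
    intro a b h
    simp only [neg_inj, add_left_inj, Nat.cast_inj] at h
    exact h
  have hsneg : Summable (fun n : ℕ => g (-((n:ℤ)+1))) :=
    (hgsum.comp_injective hinj).congr (fun n => rfl)
  have hqsum : Summable q := hsneg.congr hgq'
  have split1 : ∑' μ : ℤ, g μ = (∑' n : ℕ, g n) + ∑' n : ℕ, g (-((n:ℤ)+1)) :=
    tsum_of_nat_of_neg_add_one hsnat hsneg
  have e1 : ∑' n : ℕ, g n = 1 + ∑' n : ℕ, q n := by
    rw [hsnat.tsum_eq_zero_add]
    have hg00 : g ((0:ℕ):ℤ) = 1 := by simp [hgdef]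
    rw [hg00]
    congr 1
    apply tsum_congr
    intro n
    have hc : ((n+1:ℕ):ℤ) = (n:ℤ)+1 := by push_cast; ring
    rw [show g ((n+1:ℕ):ℤ) = g ((n:ℤ)+1) from by rw [hc], hgq n]
  have e2 : ∑' n : ℕ, g (-((n:ℤ)+1)) = ∑' n : ℕ, q n := tsum_congr hgq'
  -- estimate T = ∑' q
  set N : ℕ := ⌈V⌉₊ with hNdef
  have hNV : V ≤ (N:ℝ) := Nat.le_ceil V
  have hN1 : (N:ℝ) ≤ V + 1 := (Nat.ceil_lt_add_one hV0.le).le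
  have hNr : (0:ℝ) < (N:ℝ) := lt_of_lt_of_le hV0 hNV
  have part1 : ∑ i ∈ range N, q i ≤ 1 + Real.log N := by
    calc ∑ i ∈ range N, q i ≤ ∑ i ∈ range N, 1/((i:ℝ)+1) :=
          Finset.sum_le_sum (fun i _ => min_le_left _ _)
      _ = ((harmonic N : ℚ) : ℝ) := by
          rw [harmonic]
          push_cast
          exact Finset.sum_congr rfl (fun i _ => by rw [one_div])
      _ ≤ 1 + Real.log N := harmonic_le_one_add_log N
  set f : ℕ → ℝ := fun n => V * (1/((n:ℝ)+N)) with hfdef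
  have hpt : ∀ n : ℕ, q (n + N) ≤ f n - f (n+1) := by
    intro n
    have hx : (0:ℝ) < (n:ℝ) + N := by
      have : (0:ℝ) ≤ (n:ℝ) := Nat.cast_nonneg n
      linarith
    have e : ((n + N : ℕ):ℝ) = (n:ℝ) + N := by push_cast; ring
    have h2 : f n - f (n+1) = V / (((n:ℝ)+N) * (((n:ℝ)+N)+1)) := by
      simp only [hfdef]
      push_cast
      field_simp
      ring
    calc q (n+N) ≤ V/(((n+N:ℕ):ℝ)+1)^2 := min_le_right _ _
      _ ≤ V / (((n:ℝ)+N) * (((n:ℝ)+N)+1)) := by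
          rw [e]
          gcongr
          nlinarith
      _ = f n - f (n+1) := h2.symm
  have part2 : (∑' n : ℕ, q (n + N)) ≤ 1 := by
    have h1 : ∀ K, ∑ n ∈ range K, q (n + N) ≤ V * (1/(N:ℝ)) := by
      intro K
      calc ∑ n ∈ range K, q (n + N) ≤ ∑ n ∈ range K, (f n - f (n+1)) :=
            Finset.sum_le_sum (fun i _ => hpt i)
        _ = f 0 - f K := Finset.sum_range_sub' f K
        _ ≤ f 0 := by
            have : 0 ≤ f K := by simp only [hfdef]; positivity
            linarith
        _ = V * (1/(N:ℝ)) := by simp [hfdef]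
    calc (∑' n : ℕ, q (n + N)) ≤ V * (1/(N:ℝ)) :=
          Real.tsum_le_of_sum_range_le (fun n => hq0 _) h1
      _ ≤ 1 := by rw [mul_one_div, div_le_one hNr]; exact hNV
  have hT : (∑' n : ℕ, q n) ≤ 2 + Real.log N := by
    rw [← hqsum.sum_add_tsum_nat_add N]
    have := add_le_add part1 part2
    linarith
  have hlogN : Real.log (N:ℝ) ≤ Real.log (V+1) := Real.log_le_log hNr hN1
  have hVlog : Real.log (V+1) ≤ Real.log 2 + L := by
    have h2 : V + 1 ≤ 2 * (m*ν+1) := by nlinarith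
    calc Real.log (V+1) ≤ Real.log (2*(m*ν+1)) := Real.log_le_log (by linarith) h2
      _ = Real.log 2 + L := by
          rw [Real.log_mul (by norm_num) (by linarith), hLdef]
  have hgsum_le : (∑' μ : ℤ, g μ) ≤ 5 + 2 * Real.log 2 + 2 * L := by
    rw [split1, e1, e2]
    have : (∑' n : ℕ, q n) ≤ 2 + Real.log 2 + L := by
      calc (∑' n : ℕ, q n) ≤ 2 + Real.log N := hT
        _ ≤ 2 + Real.log (V+1) := by linarith
        _ ≤ 2 + Real.log 2 + L := by linarith
      
    linarith
  calc (∑' μ : ℤ, Complex.abs (hfunHat ν m μ)) ≤ ∑' μ : ℤ, g μ := key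
    _ ≤ 5 + 2 * Real.log 2 + 2 * L := hgsum_le
    _ ≤ 20 * L := by linarith
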